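/- arXiv:2001.06557 — 9 statements merged into one kernel-verified Lean document; each statement's English description precedes it below -/
import Mathlib

section
/- Suppose G is a finite group with |G| = k², g^k = 1 for every g ∈ G, N is a subgroup of the center Z(G) with |N| = k, n : Fin k → N is a bijective enumeration of N with ∏_{ℓ=0}^{k-1} n(ℓ) = 1, and t : Fin k → G is an injective map whose image is a complete set of left coset representatives of N in G such that for every i, the ordered product ∏_{ℓ=0}^{k-1} (t(ℓ)·t(i)) = 1. Then setting ρ(m,ℓ) = t(ℓ)·n(m) (row labels) and γ(i,j) = n(j)·t(i) (column labels) yields a pandiagonal magic Cayley-sudoku table of G: (a) for every block index (m,i) ∈ Fin k × Fin k, the map (ℓ,j) ↦ ρ(m,ℓ)·γ(i,j) is a bijection from Fin k × Fin k to G; and (b) for every (m,i) and every j ∈ Fin k, the row product ∏_{ℓ=0}^{k-1} ρ(m,j)·γ(i,ℓ), the column product ∏_{ℓ=0}^{k-1} ρ(m,ℓ)·γ(i,j), the broken diagonal product ∏_{ℓ=0}^{k-1} ρ(m,ℓ)·γ(i,(j+ℓ) mod k), and the broken antidiagonal product ∏_{ℓ=0}^{k-1} ρ(m,ℓ)·γ(i,(j−ℓ)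 mod k) all equal 1 (all ordered products taken in increasing order of ℓ). -/
lemma mcs_central_pull {G : Type*} [Group G] :
    ∀ {k : ℕ} (c b : Fin k → G), (∀ ℓ, c ℓ ∈ Subgroup.center G) →
      (List.ofFn fun ℓ => c ℓ * b ℓ).prod = (List.ofFn c).prod * (List.ofFn b).prod := by
  intro k
  induction k with
  | zero => simp
  | succ k ih =>
    intro c b hc
    have hmem : (List.ofFn fun ℓ => c ℓ.succ).prod ∈ Subgroup.center G := by
      refine Subgroup.list_prod_mem _ ?_
      intro x hx
      simp only [List.mem_ofFn] at hx
      obtain ⟨ℓ, rfl⟩ := hx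
      exact hc _
    have hcomm : b 0 * (List.ofFn fun ℓ => c ℓ.succ).prod
        = (List.ofFn fun ℓ => c ℓ.succ).prod * b 0 :=
      Subgroup.mem_center_iff.1 hmem (b 0)
    simp only [List.ofFn_succ, List.prod_cons,
      ih (fun ℓ => c ℓ.succ) (fun ℓ => b ℓ.succ) (fun ℓ => hc _)]
    rw [mul_assoc (c 0), ← mul_assoc (b 0), hcomm]
    group

lemma mcs_perm_prod {G : Type*} [Group G] {k : ℕ} (c : Fin k → Subgroup.center G)
    (σ : Equiv.Perm (Fin k)) :
    (List.ofFn fun ℓ => ((c (σ ℓ) : G))).prod = (List.ofFn fun ℓ => ((c ℓ : G))).prod := by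
  have key : ∀ f : Fin k → Subgroup.center G,
      (List.ofFn fun ℓ => ((f ℓ : G))).prod = (((List.ofFn f).prod : Subgroup.center G) : G) := by
    intro f
    symm
    rw [show (((List.ofFn f).prod : Subgroup.center G) : G)
        = (Subgroup.center G).subtype (List.ofFn f).prod from rfl,
      map_list_prod (Subgroup.center G).subtype, List.map_ofFn]
    rfl
  open scoped IsMulCommutative in
  rw [key, key, List.prod_ofFn, List.prod_ofFn, Equiv.prod_comp σ c]

lemma mcs_central_left {G : Type*} [Group G] {x : G} (hx : x ∈ Subgroup.center G) (a b : G) :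
    a * (x * b) = x * (a * b) := by
  rw [← mul_assoc, Subgroup.mem_center_iff.1 hx a, mul_assoc]


/-- The magic Cayley-sudoku construction (Theorem: Magic Cayley-Sudoku Construction).
Row labels `ρ (m, ℓ) = t ℓ * n m`, column labels `γ (i, j) = n j * t i`. -/
theorem magic_cayley_sudoku_construction {G : Type*} [Group G] [Finite G] {k : ℕ}
    (hcard : Nat.card G = k ^ 2)
    (hexp : ∀ g : G, g ^ k = 1)
    (N : Subgroup G) (hN : N ≤ Subgroup.center G) (hNcard : Nat.card N = k)
    (n : Fin k → N) (hn : Function.Bijective n)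
    (hnprod : (List.ofFn fun ℓ : Fin k => (n ℓ : G)).prod = 1)
    (t : Fin k → G) (htinj : Function.Injective t)
    (hreps : ∀ g : G, ∃! x, x ∈ Set.range t ∧ g⁻¹ * x ∈ N)
    (htprod : ∀ i : Fin k, (List.ofFn fun ℓ : Fin k => t ℓ * t i).prod = 1) :
    -- the row labels and the column labels are bijective
    Function.Bijective (fun p : Fin k × Fin k => t p.2 * (n p.1 : G)) ∧
    Function.Bijective (fun p : Fin k × Fin k => (n p.2 : G) * t p.1) ∧
    -- (a) each block contains every element of `G` exactly once
    (∀ m i : Fin k,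
      Function.Bijective
        (fun p : Fin k × Fin k => (t p.1 * (n m : G)) * ((n p.2 : G) * t i))) ∧
    -- (b) all row, column, broken diagonal and broken antidiagonal products are trivial
    (∀ m i j : Fin k,
      (List.ofFn fun ℓ : Fin k => (t j * (n m : G)) * ((n ℓ : G) * t i)).prod = 1 ∧
      (List.ofFn fun ℓ : Fin k => (t ℓ * (n m : G)) * ((n j : G) * t i)).prod = 1 ∧
      (List.ofFn fun ℓ : Fin k => (t ℓ * (n m : G)) * ((n (j + ℓ) : G) * t i)).prod = 1 ∧
      (List.ofFn fun ℓ : Fin k => (t ℓ * (n m : G)) * ((n (j - ℓ) : G) * t i)).prod = 1) := by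
  have hk : k ≠ 0 := by
    rintro rfl
    have := Nat.card_pos (α := G)
    simp [hcard] at this
  haveI : NeZero k := ⟨hk⟩
  haveI := Fintype.ofFinite G
  have key : ∀ (a b : Fin k) (x y : G), x ∈ N → y ∈ N → t a * x = t b * y → a = b ∧ x = y := by
    intro a b x y hx hy h
    obtain ⟨z, -, huniq⟩ := hreps (t a * x)
    have h1 : t a = z := huniq (t a) ⟨⟨a, rfl⟩, by
      have e : (t a * x)⁻¹ * t a = x⁻¹ := by group
      rw [e]; exact N.inv_mem hx⟩
    have h2 : t b = z := huniq (t b) ⟨⟨b, rfl⟩, by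
      have e : (t a * x)⁻¹ * t b = y⁻¹ := by rw [h]; group
      rw [e]; exact N.inv_mem hy⟩
    have hab : a = b := htinj (h1.trans h2.symm)
    subst hab
    exact ⟨rfl, mul_left_cancel h⟩
  have hcardP : Fintype.card (Fin k × Fin k) = Fintype.card G := by
    have hG : Fintype.card G = k ^ 2 := by rw [← Nat.card_eq_fintype_card]; exact hcard
    simp [hG, sq]
  refine ⟨?_, ?_, ?_, ?_⟩
  · refine (Fintype.bijective_iff_injective_and_card _).2 ⟨?_, hcardP⟩
    rintro ⟨m, ℓ⟩ ⟨m', ℓ'⟩ h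
    obtain ⟨h1, h2⟩ := key ℓ ℓ' (n m) (n m') (n m).2 (n m').2 h
    exact Prod.ext (hn.1 (Subtype.ext h2)) h1
  · refine (Fintype.bijective_iff_injective_and_card _).2 ⟨?_, hcardP⟩
    rintro ⟨ℓ, m⟩ ⟨ℓ', m'⟩ h
    simp only at h
    rw [← Subgroup.mem_center_iff.1 (hN (n m).2) (t ℓ),
      ← Subgroup.mem_center_iff.1 (hN (n m').2) (t ℓ')] at h
    obtain ⟨h1, h2⟩ := key ℓ ℓ' (n m) (n m') (n m).2 (n m').2 h
    exact Prod.ext h1 (hn.1 (Subtype.ext h2))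
  · intro m i
    refine (Fintype.bijective_iff_injective_and_card _).2 ⟨?_, hcardP⟩
    rintro ⟨a, b⟩ ⟨a', b'⟩ h
    simp only at h
    have hh : (t a * ((n m : G) * (n b : G))) * t i
        = (t a' * ((n m : G) * (n b' : G))) * t i := by
      simpa [mul_assoc] using h
    obtain ⟨h1, h2⟩ := key a a' _ _ (N.mul_mem (n m).2 (n b).2)
      (N.mul_mem (n m).2 (n b').2) (mul_right_cancel hh)
    refine Prod.ext h1 (hn.1 (Subtype.ext (mul_left_cancel h2)))
  · intro m i j
    set n' : Fin k → Subgroup.center G := fun ℓ => ⟨(n ℓ : G), hN (n ℓ).2⟩ with hn'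
    have hn'prod : (List.ofFn fun ℓ => ((n' ℓ : G))).prod = 1 := hnprod
    refine ⟨?_, ?_, ?_, ?_⟩
    · have e : (fun ℓ : Fin k => (t j * (n m : G)) * ((n ℓ : G) * t i))
          = fun ℓ => ((n m : G) * (n ℓ : G)) * (t j * t i) := by
        funext ℓ
        rw [mul_assoc, mcs_central_left (hN (n m).2), mcs_central_left (hN (n ℓ).2),
          ← mul_assoc]
      rw [e, mcs_central_pull _ _ (fun ℓ => (Subgroup.center G).mul_mem (hN (n m).2) (hN (n ℓ).2)),
        mcs_central_pull (fun _ => (n m : G)) _ (fun ℓ => hN (n m).2), hnprod]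
      simp [List.ofFn_const, List.prod_replicate, hexp]
    · have e : (fun ℓ : Fin k => (t ℓ * (n m : G)) * ((n j : G) * t i))
          = fun ℓ => ((n m : G) * (n j : G)) * (t ℓ * t i) := by
        funext ℓ
        rw [mul_assoc, mcs_central_left (hN (n m).2), mcs_central_left (hN (n j).2),
          ← mul_assoc]
      rw [e, mcs_central_pull _ _ (fun ℓ => (Subgroup.center G).mul_mem (hN (n m).2) (hN (n j).2)),
        htprod i]
      simp [List.ofFn_const, List.prod_replicate, hexp]
    · have e : (fun ℓ : Fin k => (t ℓ * (n m : G)) * ((n (j + ℓ) : G) * t i))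
          = fun ℓ => ((n m : G) * (n (j + ℓ) : G)) * (t ℓ * t i) := by
        funext ℓ
        rw [mul_assoc, mcs_central_left (hN (n m).2), mcs_central_left (hN (n (j + ℓ)).2),
          ← mul_assoc]
      rw [e, mcs_central_pull _ _
          (fun ℓ => (Subgroup.center G).mul_mem (hN (n m).2) (hN (n (j + ℓ)).2)),
        mcs_central_pull (fun _ => (n m : G)) _ (fun ℓ => hN (n m).2), htprod i]
      have hperm := mcs_perm_prod n' (Equiv.addLeft j)
      simp only [Equiv.coe_addLeft] at hperm
      have : (List.ofFn fun ℓ : Fin k => ((n (j + ℓ) : G))).prod = 1 := by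
        rw [show (fun ℓ : Fin k => ((n (j + ℓ) : G))) = fun ℓ => ((n' (j + ℓ) : G)) from rfl,
          hperm, hn'prod]
      rw [this]
      simp [List.ofFn_const, List.prod_replicate, hexp]
    · have e : (fun ℓ : Fin k => (t ℓ * (n m : G)) * ((n (j - ℓ) : G) * t i))
          = fun ℓ => ((n m : G) * (n (j - ℓ) : G)) * (t ℓ * t i) := by
        funext ℓ
        rw [mul_assoc, mcs_central_left (hN (n m).2), mcs_central_left (hN (n (j - ℓ)).2),
          ← mul_assoc]
      rw [e, mcs_central_pull _ _
          (fun ℓ => (Subgroup.center G).mul_mem (hN (n m).2) (hN (n (j - ℓ)).2)),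
        mcs_central_pull (fun _ => (n m : G)) _ (fun ℓ => hN (n m).2), htprod i]
      have hperm := mcs_perm_prod n' (Equiv.subLeft j)
      simp only [Equiv.subLeft_apply] at hperm
      have : (List.ofFn fun ℓ : Fin k => ((n (j - ℓ) : G))).prod = 1 := by
        rw [show (fun ℓ : Fin k => ((n (j - ℓ) : G))) = fun ℓ => ((n' (j - ℓ) : G)) from rfl,
          hperm, hn'prod]
      rw [this]
      simp [List.ofFn_const, List.prod_replicate, hexp]
end

section
/- Suppose G is a finite group with g^k = 1 for every g ∈ G, N is a subgroup of the center Z(G), n : Fin k → N is a bijective enumeration of N with ∏_{ℓ=0}^{k-1} n(ℓ) = 1, and t : Fin k → G satisfies ∏_{ℓ=0}^{k-1} (t(ℓ)·t_i) = 1 for a given element t_i ∈ G. Then for every m, j ∈ Fin k, the ordered broken diagonal product ∏_{ℓ=0}^{k-1} (t(ℓ)·n(m))·(n((j+ℓ) mod k)·t_i) equals 1. -/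
private lemma central_split {G : Type*} [Group G] :
    ∀ (l : List (G × G)), (∀ p ∈ l, p.2 ∈ Subgroup.center G) →
    (l.map fun p => p.1 * p.2).prod = (l.map Prod.fst).prod * (l.map Prod.snd).prod := by
  intro l
  induction l with
  | nil => simp
  | cons p l ih =>
    intro h
    have hc : p.2 ∈ Subgroup.center G := h p List.mem_cons_self
    have hcomm := (Subgroup.mem_center_iff.mp hc) ((l.map Prod.fst).prod)
    simp only [List.map_cons, List.prod_cons,
      ih (fun q hq => h q (List.mem_cons_of_mem _ hq))]
    rw [mul_assoc p.1 p.2, ← mul_assoc p.2, ← hcomm]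
    group

/-- Broken diagonal products in a block of the magic Cayley-sudoku construction are
trivial; the index `j + ℓ` is computed modulo `k` (addition in `Fin k`). -/
theorem magic_broken_diagonal_product {G : Type*} [Group G] [Finite G] {k : ℕ}
    (hexp : ∀ g : G, g ^ k = 1)
    (N : Subgroup G) (hN : N ≤ Subgroup.center G)
    (n : Fin k → N) (hn : Function.Bijective n)
    (hnprod : (List.ofFn fun ℓ : Fin k => (n ℓ : G)).prod = 1)
    (t : Fin k → G) (ti : G)
    (htprod : (List.ofFn fun ℓ : Fin k => t ℓ * ti).prod = 1)
    (m j : Fin k) :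
    (List.ofFn fun ℓ : Fin k => (t ℓ * (n m : G)) * ((n (j + ℓ) : G) * ti)).prod = 1 := by
  haveI : NeZero k := ⟨m.pos.ne'⟩
  set Z := Subgroup.center G with hZ
  have hmem : ∀ ℓ : Fin k, ((n ℓ : G)) ∈ Z := fun ℓ => hN (n ℓ).2
  let a : Z := ⟨(n m : G), hmem m⟩
  let b : Fin k → Z := fun ℓ => ⟨(n ℓ : G), hmem ℓ⟩
  let c : Fin k → Z := fun ℓ => a * b (j + ℓ)
  -- rewrite each term
  have hterm : (fun ℓ : Fin k => (t ℓ * (n m : G)) * ((n (j + ℓ) : G) * ti))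
      = fun ℓ => (t ℓ * ti) * (c ℓ : G) := by
    funext ℓ
    have h1 := (Subgroup.mem_center_iff.mp (hmem m)) (t ℓ)
    have h2 := (Subgroup.mem_center_iff.mp (mul_mem (hmem m) (hmem (j+ℓ)))) ti
    show (t ℓ * (n m : G)) * ((n (j + ℓ) : G) * ti) = (t ℓ * ti) * ((n m : G) * (n (j+ℓ) : G))
    rw [mul_assoc (t ℓ), ← mul_assoc ((n m : G)), ← h2, ← mul_assoc]
  rw [hterm]
  have := central_split (List.ofFn fun ℓ : Fin k => (t ℓ * ti, (c ℓ : G)))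
    (by
      intro p hp
      rw [List.mem_ofFn] at hp
      obtain ⟨ℓ, rfl⟩ := hp
      exact (c ℓ).2)
  simp only [List.map_ofFn, Function.comp_def] at this
  rw [this, htprod, one_mul]
  -- remaining: product of the central parts is 1
  have hcoe : (List.ofFn fun ℓ : Fin k => (c ℓ : G)).prod = ((List.ofFn c).prod : G) := by
    rw [show ((List.ofFn c).prod : G) = Z.subtype (List.ofFn c).prod from rfl,
        map_list_prod, List.map_ofFn]
    rfl
  rw [hcoe]
  suffices h : (List.ofFn c).prod = 1 by rw [h]; rfl
  letI : CommGroup Z := { (inferInstance : Group Z) with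
    mul_comm := fun x y => Subtype.ext ((Subgroup.mem_center_iff.mp y.2) x) }
  rw [show (List.ofFn c).prod = ∏ ℓ : Fin k, c ℓ from List.prod_ofFn]
  have hsplit : ∏ ℓ : Fin k, c ℓ = a ^ k * ∏ ℓ : Fin k, b (j + ℓ) := by
    rw [Finset.prod_mul_distrib, Finset.prod_const, Finset.card_univ, Fintype.card_fin]
  rw [hsplit]
  have hak : a ^ k = 1 := by
    apply Subtype.coe_injective
    push_cast
    exact hexp (n m : G)
  have hreindex : ∏ ℓ : Fin k, b (j + ℓ) = ∏ ℓ : Fin k, b ℓ :=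
    Fintype.prod_equiv (Equiv.addLeft j) _ _ (fun ℓ => rfl)
  have hb : ∏ ℓ : Fin k, b ℓ = 1 := by
    apply Subtype.coe_injective
    show ((∏ ℓ : Fin k, b ℓ : Z) : G) = ((1 : Z) : G)
    have h1 : ((∏ ℓ : Fin k, b ℓ : Z) : G) = (List.ofFn fun ℓ : Fin k => (n ℓ : G)).prod := by
      rw [← List.prod_ofFn,
          show (((List.ofFn b).prod : Z) : G) = Z.subtype (List.ofFn b).prod from rfl,
          map_list_prod, List.map_ofFn]
      rfl
    rw [h1, hnprod]
    rfl
  rw [hak, hreindex, hb, one_mul]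
end

section
/- Suppose G is a finite group with g^k = 1 for every g ∈ G, N is a subgroup of the center Z(G), n : Fin k → N is a bijective enumeration of N with ∏_{ℓ=0}^{k-1} n(ℓ) = 1, and t : Fin k → G satisfies ∏_{ℓ=0}^{k-1} (t(ℓ)·t_i) = 1 for every element t_i in the image of t. Then for every m, j ∈ Fin k and every i ∈ Fin k, the left-to-right broken diagonal product ∏_{ℓ=0}^{k-1} (t((ℓ−j) mod k)·n(m))·(n(ℓ)·t(i)) equals 1; that is, calculating broken diagonal products left to right gives the same trivial result as top to bottom. -/
private lemma prod_ofFn_mul_central {G : Type*} [Group G] :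
    ∀ {k : ℕ} (f g : Fin k → G), (∀ ℓ, g ℓ ∈ Subgroup.center G) →
      (List.ofFn fun ℓ => f ℓ * g ℓ).prod = (List.ofFn f).prod * (List.ofFn g).prod := by
  intro k
  induction k with
  | zero => intro f g _; simp
  | succ k ih =>
    intro f g hg
    rw [List.ofFn_succ, List.ofFn_succ, List.ofFn_succ, List.prod_cons, List.prod_cons,
      List.prod_cons, ih (fun ℓ => f ℓ.succ) (fun ℓ => g ℓ.succ) (fun ℓ => hg ℓ.succ)]
    have hc : ∀ x : G, g 0 * x = x * g 0 := fun x =>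
      ((Subgroup.mem_center_iff.mp (hg 0)) x).symm
    calc f 0 * g 0 * ((List.ofFn fun ℓ => f ℓ.succ).prod * (List.ofFn fun ℓ => g ℓ.succ).prod)
        = f 0 * (g 0 * (List.ofFn fun ℓ => f ℓ.succ).prod) * (List.ofFn fun ℓ => g ℓ.succ).prod := by
          group
      _ = f 0 * ((List.ofFn fun ℓ => f ℓ.succ).prod * g 0) * (List.ofFn fun ℓ => g ℓ.succ).prod := by
          rw [hc]
      _ = f 0 * (List.ofFn fun ℓ => f ℓ.succ).prod * (g 0 * (List.ofFn fun ℓ => g ℓ.succ).prod) := by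
          group

private lemma ofFn_sub_eq_rotate {G : Type*} {k : ℕ} (f : Fin k → G) (j : Fin k) :
    (List.ofFn fun ℓ => f (ℓ - j)) = (List.ofFn f).rotate ((-j : Fin k)).val := by
  apply List.ext_getElem
  · simp
  · intro i h1 h2
    simp only [List.getElem_ofFn, List.getElem_rotate, List.length_ofFn]
    congr 1
    apply Fin.ext
    simp [Fin.sub_def, Fin.neg_def, Fin.add_def, Nat.add_comm]

/-- Left-to-right broken diagonal products in a block of the magic Cayley-sudoku
construction are trivial; the index `ℓ - j` is computed modulo `k` (in `Fin k`). -/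
theorem magic_left_to_right_broken_diagonal_product {G : Type*} [Group G] [Finite G]
    {k : ℕ}
    (hexp : ∀ g : G, g ^ k = 1)
    (N : Subgroup G) (hN : N ≤ Subgroup.center G)
    (n : Fin k → N) (hn : Function.Bijective n)
    (hnprod : (List.ofFn fun ℓ : Fin k => (n ℓ : G)).prod = 1)
    (t : Fin k → G)
    (htprod : ∀ x ∈ Set.range t, (List.ofFn fun ℓ : Fin k => t ℓ * x).prod = 1)
    (m j i : Fin k) :
    (List.ofFn fun ℓ : Fin k => (t (ℓ - j) * (n m : G)) * ((n ℓ : G) * t i)).prod = 1 := by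
  have hcent : ∀ x : N, (x : G) ∈ Subgroup.center G := fun x => hN x.2
  have hfactor : ∀ ℓ : Fin k,
      (t (ℓ - j) * (n m : G)) * ((n ℓ : G) * t i)
        = (t (ℓ - j) * t i) * ((n m : G) * (n ℓ : G)) := by
    intro ℓ
    have h1 : ∀ x : G, (n m : G) * x = x * (n m : G) := fun x =>
      ((Subgroup.mem_center_iff.mp (hcent (n m))) x).symm
    have h2 : ∀ x : G, (n ℓ : G) * x = x * (n ℓ : G) := fun x =>
      ((Subgroup.mem_center_iff.mp (hcent (n ℓ))) x).symm
    calc (t (ℓ - j) * (n m : G)) * ((n ℓ : G) * t i)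
        = t (ℓ - j) * ((n m : G) * ((n ℓ : G) * t i)) := by group
      _ = t (ℓ - j) * ((n m : G) * (t i * (n ℓ : G))) := by rw [h2]
      _ = t (ℓ - j) * ((n m : G) * t i) * (n ℓ : G) := by group
      _ = t (ℓ - j) * (t i * (n m : G)) * (n ℓ : G) := by rw [h1]
      _ = (t (ℓ - j) * t i) * ((n m : G) * (n ℓ : G)) := by group
  simp only [hfactor]
  rw [prod_ofFn_mul_central (fun ℓ => t (ℓ - j) * t i) (fun ℓ => (n m : G) * (n ℓ : G))
    (fun ℓ => Subgroup.mul_mem _ (hcent (n m)) (hcent (n ℓ)))]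
  have hnm : (List.ofFn fun ℓ : Fin k => (n m : G) * (n ℓ : G)).prod = 1 := by
    rw [prod_ofFn_mul_central (fun _ => (n m : G)) (fun ℓ => (n ℓ : G)) (fun ℓ => hcent (n ℓ)),
      hnprod, mul_one]
    have : (List.ofFn fun _ : Fin k => (n m : G)) = List.replicate k (n m : G) := by
      simp [List.ofFn_const]
    rw [this, List.prod_replicate, hexp]
  have ht : (List.ofFn fun ℓ : Fin k => t (ℓ - j) * t i).prod = 1 := by
    rw [ofFn_sub_eq_rotate (fun ℓ => t ℓ * t i) j]
    exact List.prod_rotate_eq_one_of_prod_eq_one (htprod (t i) ⟨i, rfl⟩) _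
  rw [ht, hnm, mul_one]
end

section
/- Suppose G is a finite abelian group with |G| = k², g^k = 1 for every g ∈ G, N is a subgroup of G with |N| = k, the product of all elements of N equals 1, and the product of all elements of the quotient group G/N equals the identity coset N. Then there exists a map t : Fin k → G whose image is a complete set of left coset representatives of N in G such that ∏_{ℓ=0}^{k-1} t(ℓ) = 1 and, for every i ∈ Fin k, ∏_{ℓ=0}^{k-1} (t(ℓ)·t(i)) = 1. -/
/-- Theorem (Abelian Groups): the hypotheses of the magic Cayley-sudoku construction
can be realized in a suitable abelian group. -/
theorem abelian_magic_coset_reps {G : Type*} [CommGroup G] [Fintype G] {k : ℕ}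
    (hcard : Fintype.card G = k ^ 2)
    (hexp : ∀ g : G, g ^ k = 1)
    (N : Subgroup G) [Fintype N] [Fintype (G ⧸ N)]
    (hNcard : Fintype.card N = k)
    (hNprod : ∏ x : N, (x : G) = 1)
    (hQprod : ∏ x : G ⧸ N, x = 1) :
    ∃ t : Fin k → G,
      (∀ g : G, ∃! x, x ∈ Set.range t ∧ g⁻¹ * x ∈ N) ∧
      (∏ ℓ : Fin k, t ℓ) = 1 ∧
      ∀ i : Fin k, (∏ ℓ : Fin k, t ℓ * t i) = 1 := by
  have hk : 0 < k := by
    rcases Nat.eq_zero_or_pos k with h | h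
    · have := Fintype.card_pos (α := G)
      subst h; simp at hcard
    · exact h
  haveI : NeZero k := ⟨hk.ne'⟩
  -- card of quotient is k
  have hQcard : Fintype.card (G ⧸ N) = k := by
    have h := Subgroup.card_eq_card_quotient_mul_card_subgroup N
    simp only [Nat.card_eq_fintype_card, hcard, hNcard] at h
    nlinarith [h]
  -- equivalence Fin k ≃ G ⧸ N
  obtain ⟨e⟩ : Nonempty (Fin k ≃ G ⧸ N) := by
    rw [← Fintype.card_eq]
    simp [hQcard]
  set s : G ⧸ N → G := Quotient.out with hs
  have hsmk : ∀ q : G ⧸ N, (QuotientGroup.mk (s q) : G ⧸ N) = q := fun q =>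
    QuotientGroup.out_eq' q
  set P : G := ∏ q : G ⧸ N, s q with hP
  have hPmem : P ∈ N := by
    rw [← QuotientGroup.eq_one_iff]
    have : (QuotientGroup.mk P : G ⧸ N) = ∏ q : G ⧸ N, QuotientGroup.mk (s q) := by
      simp [hP]
    rw [this]
    simp only [hsmk]
    exact hQprod
  refine ⟨fun ℓ => s (e ℓ) * (if ℓ = 0 then P⁻¹ else 1), ?_, ?_, ?_⟩
  · -- coset representatives
    intro g
    set t : Fin k → G := fun ℓ => s (e ℓ) * (if ℓ = 0 then P⁻¹ else 1) with ht
    have htmk : ∀ ℓ, (QuotientGroup.mk (t ℓ) : G ⧸ N) = e ℓ := by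
      intro ℓ
      by_cases h : ℓ = 0 <;> simp [ht, h, hsmk, QuotientGroup.eq_one_iff, hPmem]
    have key : ∀ x : G, (x ∈ Set.range t ∧ g⁻¹ * x ∈ N) ↔ x = t (e.symm (QuotientGroup.mk g)) := by
      intro x
      constructor
      · rintro ⟨⟨ℓ, rfl⟩, hmem⟩
        have : (QuotientGroup.mk g : G ⧸ N) = QuotientGroup.mk (t ℓ) := by
          rw [QuotientGroup.eq]
          exact hmem
        rw [htmk] at this
        rw [show ℓ = e.symm (QuotientGroup.mk g) by rw [this]; simp]
      · rintro rfl
        refine ⟨⟨_, rfl⟩, ?_⟩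
        rw [← QuotientGroup.eq]
        rw [htmk]
        simp
    refine ⟨t (e.symm (QuotientGroup.mk g)), (key _).mpr rfl, fun x hx => (key x).mp hx⟩
  · -- product is one
    rw [Finset.prod_mul_distrib]
    rw [Finset.prod_ite_eq' Finset.univ (0 : Fin k) (fun _ => P⁻¹)]
    simp only [Finset.mem_univ, if_true]
    rw [Equiv.prod_comp e (fun q => s q), ← hP]
    simp
  · intro i
    rw [Finset.prod_mul_distrib, Finset.prod_const, Finset.card_univ, Fintype.card_fin, hexp,
      mul_one]
    rw [Finset.prod_mul_distrib]
    rw [Finset.prod_ite_eq' Finset.univ (0 : Fin k) (fun _ => P⁻¹)]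
    simp only [Finset.mem_univ, if_true]
    rw [Equiv.prod_comp e (fun q => s q), ← hP]
    simp
end

section
/- There is no magic Cayley-sudoku table for ℤ₉ (the integers mod 9 under addition). That is, there do not exist bijections ρ : Fin 3 × Fin 3 → ℤ₉ (row labels) and γ : Fin 3 × Fin 3 → ℤ₉ (column labels) such that for every block index (m,i) ∈ Fin 3 × Fin 3: the map (ℓ,j) ↦ ρ(m,ℓ) + γ(i,j) is a bijection from Fin 3 × Fin 3 to ℤ₉, and for every j ∈ Fin 3 the row sum ∑_{ℓ=0}^{2} (ρ(m,j) + γ(i,ℓ)) = 0, the column sum ∑_{ℓ=0}^{2} (ρ(m,ℓ) + γ(i,j)) = 0, the main diagonal sum ∑_{ℓ=0}^{2} (ρ(m,ℓ) + γ(i,ℓ)) = 0, and the main antidiagonal sum ∑_{ℓ=0}^{2} (ρ(m,ℓ) + γ(i,2−ℓ)) = 0 in ℤ₉. -/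
/-- There is no magic Cayley-sudoku table for `ℤ₉`. -/
theorem no_magic_cayley_sudoku_Z9 :
    ¬ ∃ (ρ γ : Fin 3 × Fin 3 → ZMod 9),
        Function.Bijective ρ ∧ Function.Bijective γ ∧
        ∀ m i : Fin 3,
          Function.Bijective (fun p : Fin 3 × Fin 3 => ρ (m, p.1) + γ (i, p.2)) ∧
          ∀ j : Fin 3,
            (∑ ℓ : Fin 3, (ρ (m, j) + γ (i, ℓ))) = 0 ∧
            (∑ ℓ : Fin 3, (ρ (m, ℓ) + γ (i, j))) = 0 ∧
            (∑ ℓ : Fin 3, (ρ (m, ℓ) + γ (i, ℓ))) = 0 ∧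
            (∑ ℓ : Fin 3, (ρ (m, ℓ) + γ (i, 2 - ℓ))) = 0 := by
  rintro ⟨ρ, γ, hρ, hγ, h⟩
  -- row sums: 3 * ρ (m, j) + ∑ γ(0, ℓ) = 0 for all m, j
  have key : ∀ m j : Fin 3, 3 * ρ (m, j) + ∑ ℓ : Fin 3, γ (0, ℓ) = 0 := by
    intro m j
    have := ((h m 0).2 j).1
    rw [Finset.sum_add_distrib, Finset.sum_const] at this
    simp [Finset.card_univ, ← this]
  obtain ⟨a, ha⟩ := hρ.2 1
  obtain ⟨b, hb⟩ := hρ.2 2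
  have h1 := key a.1 a.2
  have h2 := key b.1 b.2
  rw [Prod.mk.eta, ha] at h1
  rw [Prod.mk.eta, hb] at h2
  have : (3 : ZMod 9) = 6 := by
    have := h1.trans h2.symm
    linear_combination this
  exact absurd this (by decide)
end

section
/- There is no magic Cayley-sudoku table for ℤ₂ × ℤ₂ (with componentwise addition mod 2). That is, there do not exist bijections ρ : Fin 2 × Fin 2 → ℤ₂ × ℤ₂ (row labels) and γ : Fin 2 × Fin 2 → ℤ₂ × ℤ₂ (column labels) such that for every block index (m,i) ∈ Fin 2 × Fin 2: the map (ℓ,j) ↦ ρ(m,ℓ) + γ(i,j) is a bijection from Fin 2 × Fin 2 to ℤ₂ × ℤ₂, and for every j ∈ Fin 2 the row sum ∑_{ℓ=0}^{1} (ρ(m,j) + γ(i,ℓ)) = 0, the column sum ∑_{ℓ=0}^{1} (ρ(m,ℓ) + γ(i,j)) = 0, the main diagonal sum ∑_{ℓ=0}^{1} (ρ(m,ℓ) + γ(i,ℓ)) = 0, and the main antidiagonal sum ∑_{ℓ=0}^{1} (ρ(m,ℓ) + γ(i,1−ℓ)) = 0 in ℤ₂ × ℤ₂. -/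
/-- There is no magic Cayley-sudoku table for `ℤ₂ × ℤ₂`. -/
theorem no_magic_cayley_sudoku_Z2xZ2 :
    ¬ ∃ (ρ γ : Fin 2 × Fin 2 → ZMod 2 × ZMod 2),
        Function.Bijective ρ ∧ Function.Bijective γ ∧
        ∀ m i : Fin 2,
          Function.Bijective (fun p : Fin 2 × Fin 2 => ρ (m, p.1) + γ (i, p.2)) ∧
          ∀ j : Fin 2,
            (∑ ℓ : Fin 2, (ρ (m, j) + γ (i, ℓ))) = 0 ∧
            (∑ ℓ : Fin 2, (ρ (m, ℓ) + γ (i, j))) = 0 ∧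
            (∑ ℓ : Fin 2, (ρ (m, ℓ) + γ (i, ℓ))) = 0 ∧
            (∑ ℓ : Fin 2, (ρ (m, ℓ) + γ (i, 1 - ℓ))) = 0 := by
  rintro ⟨ρ, γ, hρ, hγ, h⟩
  have hrow := ((h 0 0).2 0).1
  simp only [Fin.sum_univ_two] at hrow
  -- ρ(0,0)+γ(0,0) + (ρ(0,0)+γ(0,1)) = 0 ⇒ γ(0,0) = γ(0,1)
  have key : γ (0, 0) = γ (0, 1) := by
    have h2 : ∀ x : ZMod 2 × ZMod 2, x + x = 0 := by decide
    have : γ (0, 0) + γ (0, 1) = 0 := by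
      have := hrow
      linear_combination this - h2 (ρ (0, 0))
    have := h2 (γ (0, 1))
    calc γ (0, 0) = γ (0, 0) + (γ (0, 1) + γ (0, 1)) := by rw [h2]; ring
      _ = (γ (0, 0) + γ (0, 1)) + γ (0, 1) := by ring
      _ = γ (0, 1) := by rw [‹γ (0, 0) + γ (0, 1) = 0›]; ring
  have := hγ.1 key
  exact absurd this (by decide)
end

section
/- Let H be any finite group with |H| = n, and let G = H × H × ℤₙ × ℤₙ (where ℤₙ is the cyclic group of integers mod n). Then H is isomorphic to a subgroup of G, and G admits a pandiagonal magic Cayley-sudoku table with k = n²; that is, there exist bijective row labels ρ : Fin k × Fin k → G and bijective column labels γ : Fin k × Fin k → G such that for every block index (m,i) ∈ Fin k × Fin k, the map (ℓ,j) ↦ ρ(m,ℓ)·γ(i,j) is a bijection from Fin k × Fin k to G, and for every j ∈ Fin k the ordered row product ∏_{ℓ=0}^{k−1} ρ(m,j)·γ(i,ℓ), column product ∏_{ℓ=0}^{k−1} ρ(m,ℓ)·γ(i,j), broken diagonal product ∏_{ℓ=0}^{k−1} ρ(m,ℓ)·γ(i,(j+ℓ) mod k), and broken antidiagonal product ∏_{ℓ=0}^{k−1}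 ρ(m,ℓ)·γ(i,(j−ℓ) mod k) all equal the identity of G. In particular, every finite group is isomorphic to a subgroup of a finite group having a pandiagonal magic Cayley-sudoku table. -/
open Multiplicative
open Fin.NatCast

namespace PandiagAux

variable {H : Type*} [Group H]

lemma listProd_periodic (n : ℕ) (W : ℕ → H) (hW : ∀ t, W (t + n) = W t) :
    ∀ m, ((List.range (n * m)).map W).prod = ((List.range n).map W).prod ^ m := by
  intro m
  induction m with
  | zero => simp
  | succ m ih =>
      have h : n * (m + 1) = n + n * m := by ring
      rw [h, List.range_add, List.map_append, List.prod_append, List.map_map]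
      have h2 : ((List.range (n * m)).map (W ∘ fun x => n + x)) = (List.range (n * m)).map W := by
        apply List.map_congr_left
        intro x _
        simp only [Function.comp]
        rw [Nat.add_comm]; exact hW x
      rw [h2, ih, pow_succ']

lemma ofFn_eq_range_map {α : Type*} {k : ℕ} [NeZero k] (f : Fin k → α) :
    List.ofFn f = (List.range k).map (fun t : ℕ => f (t : Fin k)) := by
  apply List.ext_getElem
  · simp
  · intro i h1 h2
    have hik : i < k := by simpa using h1
    have hc : (↑i : Fin k) = ⟨i, hik⟩ := by
      ext; simp [Fin.val_natCast, Nat.mod_eq_of_lt hik]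
    simp [List.getElem_ofFn, hc]

lemma prodH_eq_one [Fintype H] {n k : ℕ} [NeZero k] (hc : Fintype.card H = n) (hn : 0 < n)
    (hk : k = n * n) (w : Fin k → H)
    (hw : ∀ t : Fin k, w (t + (n : Fin k)) = w t) :
    (List.ofFn w).prod = 1 := by
  subst hk
  rw [ofFn_eq_range_map]
  have hW : ∀ t : ℕ, (fun t : ℕ => w (t : Fin (n*n))) (t + n) = (fun t : ℕ => w (t : Fin (n*n))) t := by
    intro t
    simp only [Nat.cast_add]
    exact hw _
  rw [listProd_periodic (H := H) n (fun t : ℕ => w (t : Fin (n*n))) hW n]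
  have hp := pow_card_eq_one (x := (List.map (fun t : ℕ => w (t : Fin (n*n))) (List.range n)).prod)
  rw [hc] at hp
  exact hp


/-- first digit: value mod n -/
def d1 {k : ℕ} (n : ℕ) (hn : 0 < n) (x : Fin k) : Fin n := ⟨x.val % n, Nat.mod_lt _ hn⟩

/-- second digit: value div n, as element of ZMod n -/
def d2 {k : ℕ} (n : ℕ) (x : Fin k) : ZMod n := ((x.val / n : ℕ) : ZMod n)

lemma d1_add_n {n k : ℕ} [NeZero k] (hn : 0 < n) (hd : n ∣ k) (x : Fin k) :
    d1 n hn (x + (n : Fin k)) = d1 n hn x := by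
  ext
  show (x + (n : Fin k)).val % n = x.val % n
  rw [Fin.add_def]
  simp only [Fin.val_natCast]
  rw [Nat.mod_mod_of_dvd _ hd, Nat.add_mod, Nat.mod_mod_of_dvd _ hd, Nat.mod_self]
  simp [Nat.mod_mod]

lemma d1_sub_n {n k : ℕ} [NeZero k] (hn : 0 < n) (hd : n ∣ k) (x : Fin k) :
    d1 n hn (x - (n : Fin k)) = d1 n hn x := by
  ext
  show (x - (n : Fin k)).val % n = x.val % n
  rw [Fin.sub_def]
  simp only [Fin.val_natCast]
  rw [Nat.mod_mod_of_dvd _ hd]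
  have h1 : n ∣ n % k := (Nat.dvd_mod_iff hd).mpr dvd_rfl
  have h2 : n ∣ (k - n % k) := Nat.dvd_sub hd h1
  obtain ⟨c, hc⟩ := h2
  have h3 : (k - n % k) % n = 0 := by rw [hc, Nat.mul_mod_right]
  rw [Nat.add_mod, h3]
  simp [Nat.mod_mod]


lemma prodZ_eq_one {n k : ℕ} [NeZero n] (v : Fin k → ZMod n) (hv : ∑ t, v t = 0) :
    (List.ofFn fun ℓ : Fin k => Multiplicative.ofAdd (v ℓ)).prod = 1 := by
  rw [List.prod_ofFn, ← ofAdd_sum, hv]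
  rfl

lemma sum_d2 {n k : ℕ} [NeZero n] (hn : 0 < n) (hk : k = n * n) :
    ∑ t : Fin k, d2 n t = 0 := by
  have h1 : ∑ t : Fin k, d2 n t = ((∑ t ∈ Finset.range k, t / n : ℕ) : ZMod n) := by
    rw [Nat.cast_sum]
    exact Fin.sum_univ_eq_sum_range (fun t => ((t / n : ℕ) : ZMod n)) k
  have hdvd : ∀ m : ℕ, n ∣ ∑ t ∈ Finset.range (n * m), t / n := by
    intro m
    induction m with
    | zero => simp
    | succ m ih =>
        have hio : ∑ i ∈ Finset.Ico (n * m) (n * (m+1)), i / n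
            = ∑ i ∈ Finset.range n, (n * m + i) / n := by
          rw [Finset.sum_Ico_eq_sum_range]
          have he : n * (m + 1) - n * m = n := by ring_nf; omega
          rw [he]
        have hr : ∑ t ∈ Finset.range (n * (m+1)), t / n
            = (∑ t ∈ Finset.range (n * m), t / n) + ∑ i ∈ Finset.range n, (n * m + i) / n := by
          rw [← hio, Finset.range_eq_Ico, ← Finset.sum_Ico_consecutive (fun t => t / n)
            (Nat.zero_le (n * m)) (by nlinarith : n * m ≤ n * (m+1)), ← Finset.range_eq_Ico]
        rw [hr]
        refine dvd_add ih ?_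
        have : ∀ i ∈ Finset.range n, (n * m + i) / n = m := by
          intro i hi
          rw [Nat.mul_add_div hn]
          simp [Nat.div_eq_of_lt (Finset.mem_range.mp hi)]
        rw [Finset.sum_congr rfl this, Finset.sum_const, Finset.card_range, smul_eq_mul]
        exact Dvd.intro m rfl
  rw [h1, hk]
  obtain ⟨c, hc⟩ := hdvd n
  rw [hc]
  push_cast
  simp [ZMod.natCast_self]

lemma prod_fst {α β : Type*} [Monoid α] [Monoid β] {k : ℕ} (f : Fin k → α) (g : Fin k → β) :
    (List.ofFn (fun i => ((f i, g i) : α × β))).prod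
      = ((List.ofFn f).prod, (List.ofFn g).prod) := by
  induction k with
  | zero => simp [Prod.ext_iff]
  | succ m ih =>
      rw [List.ofFn_succ, List.ofFn_succ, List.ofFn_succ, List.prod_cons, List.prod_cons,
        List.prod_cons, ih (fun i => f i.succ) (fun i => g i.succ)]
      rfl


lemma fst_listProd {α β : Type*} [Monoid α] [Monoid β] (l : List (α × β)) :
    l.prod.1 = (l.map Prod.fst).prod := by
  induction l with
  | nil => rfl
  | cons a l ih => simp [List.prod_cons, ih]

lemma snd_listProd {α β : Type*} [Monoid α] [Monoid β] (l : List (α × β)) :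
    l.prod.2 = (l.map Prod.snd).prod := by
  induction l with
  | nil => rfl
  | cons a l ih => simp [List.prod_cons, ih]

lemma master [Fintype H] {n k : ℕ} [NeZero n] [NeZero k] (hc : Fintype.card H = n)
    (hn : 0 < n) (hk : k = n * n) (A B : Fin k → H) (C D : Fin k → ZMod n)
    (hA : ∀ t : Fin k, A (t + (n : Fin k)) = A t)
    (hB : ∀ t : Fin k, B (t + (n : Fin k)) = B t)
    (hC : ∑ t, C t = 0) (hD : ∑ t, D t = 0) :
    (List.ofFn (fun ℓ : Fin k =>
      ((A ℓ, B ℓ, Multiplicative.ofAdd (C ℓ), Multiplicative.ofAdd (D ℓ)) :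
        H × H × Multiplicative (ZMod n) × Multiplicative (ZMod n)))).prod = 1 := by
  have e1 : (1 : H × H × Multiplicative (ZMod n) × Multiplicative (ZMod n))
      = (1, 1, 1, 1) := rfl
  rw [e1]
  refine Prod.ext ?_ (Prod.ext ?_ (Prod.ext ?_ ?_))
  · rw [fst_listProd, List.map_ofFn]
    exact prodH_eq_one hc hn hk A hA
  · rw [snd_listProd, List.map_ofFn, fst_listProd, List.map_ofFn]
    exact prodH_eq_one hc hn hk B hB
  · rw [snd_listProd, List.map_ofFn, snd_listProd, List.map_ofFn,
      fst_listProd, List.map_ofFn]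
    exact prodZ_eq_one C hC
  · rw [snd_listProd, List.map_ofFn, snd_listProd, List.map_ofFn,
      snd_listProd, List.map_ofFn]
    exact prodZ_eq_one D hD

lemma sum_const_zmod {n k : ℕ} [NeZero n] (hk : k = n * n) (c : ZMod n) :
    ∑ _t : Fin k, c = 0 := by
  rw [Finset.sum_const, Finset.card_univ, Fintype.card_fin, nsmul_eq_mul, hk]
  push_cast
  simp [ZMod.natCast_self]

lemma pattern_bij [Fintype H] {n k : ℕ} [NeZero n] [NeZero k] (hc : Fintype.card H = n)
    (hn : 0 < n) (hk : k = n * n) (e : Fin n ≃ H) (c1 c2 : H) (z1 z2 : ZMod n) :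
    Function.Bijective (fun p : Fin k × Fin k =>
      ((e (d1 n hn p.1) * c1, c2 * e (d1 n hn p.2),
        Multiplicative.ofAdd (d2 n p.1 + z1), Multiplicative.ofAdd (z2 + d2 n p.2)) :
        H × H × Multiplicative (ZMod n) × Multiplicative (ZMod n))) := by
  rw [Fintype.bijective_iff_injective_and_card]
  constructor
  · rintro ⟨x, y⟩ ⟨x', y'⟩ h
    simp only [Prod.mk.injEq] at h
    obtain ⟨h1, h2, h3, h4⟩ := h
    have hx1 : x.val % n = x'.val % n := by
      have := e.injective (mul_right_cancel h1)
      simpa [d1, Fin.ext_iff] using this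
    have hy1 : y.val % n = y'.val % n := by
      have := e.injective (mul_left_cancel h2)
      simpa [d1, Fin.ext_iff] using this
    have hdlt : ∀ z : Fin k, z.val / n < n := by
      intro z
      have hz : z.val < n * n := by rw [← hk]; exact z.isLt
      exact Nat.div_lt_of_lt_mul (by rwa [Nat.mul_comm] at hz)
    have hx2 : x.val / n = x'.val / n := by
      have h3' : d2 n x = d2 n x' := add_right_cancel (Multiplicative.ofAdd.injective h3)
      have := congrArg ZMod.val h3'
      rwa [d2, d2, ZMod.val_cast_of_lt (hdlt x), ZMod.val_cast_of_lt (hdlt x')] at this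
    have hy2 : y.val / n = y'.val / n := by
      have h4' : d2 n y = d2 n y' := add_left_cancel (Multiplicative.ofAdd.injective h4)
      have := congrArg ZMod.val h4'
      rwa [d2, d2, ZMod.val_cast_of_lt (hdlt y), ZMod.val_cast_of_lt (hdlt y')] at this
    have hx : x = x' := by
      ext
      calc x.val = n * (x.val / n) + x.val % n := (Nat.div_add_mod _ _).symm
        _ = n * (x'.val / n) + x'.val % n := by rw [hx2, hx1]
        _ = x'.val := Nat.div_add_mod _ _
    have hy : y = y' := by
      ext
      calc y.val = n * (y.val / n) + y.val % n := (Nat.div_add_mod _ _).symm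
        _ = n * (y'.val / n) + y'.val % n := by rw [hy2, hy1]
        _ = y'.val := Nat.div_add_mod _ _
    exact Prod.ext hx hy
  · simp only [Fintype.card_prod, Fintype.card_fin, Fintype.card_multiplicative, ZMod.card, hc, hk]
    ring

end PandiagAux

open PandiagAux

/-- Application (Arbitrary Groups): every finite group `H` embeds into the group
`G = H × H × ℤₙ × ℤₙ` (with `n = |H|`), which admits a pandiagonal magic
Cayley-sudoku table with `k = n²`. -/
theorem arbitrary_group_embeds_in_magic_group {H : Type*} [Group H] [Fintype H]
    (n k : ℕ) (hn : Fintype.card H = n) (hk : k = n ^ 2) :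
    ∃ K : Subgroup (H × H × Multiplicative (ZMod n) × Multiplicative (ZMod n)),
      Nonempty (H ≃* K) ∧
    ∃ ρ γ : Fin k × Fin k → H × H × Multiplicative (ZMod n) × Multiplicative (ZMod n),
      Function.Bijective ρ ∧ Function.Bijective γ ∧
      ∀ m i : Fin k,
        Function.Bijective (fun p : Fin k × Fin k => ρ (m, p.1) * γ (i, p.2)) ∧
        ∀ j : Fin k,
          (List.ofFn fun ℓ : Fin k => ρ (m, j) * γ (i, ℓ)).prod = 1 ∧
          (List.ofFn fun ℓ : Fin k => ρ (m, ℓ) * γ (i, j)).prod = 1 ∧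
          (List.ofFn fun ℓ : Fin k => ρ (m, ℓ) * γ (i, j + ℓ)).prod = 1 ∧
          (List.ofFn fun ℓ : Fin k => ρ (m, ℓ) * γ (i, j - ℓ)).prod = 1 := by
  have hn0 : 0 < n := hn ▸ Fintype.card_pos
  haveI : NeZero n := ⟨hn0.ne'⟩
  have hk' : k = n * n := by rw [hk]; ring
  haveI : NeZero k := ⟨by rw [hk']; positivity⟩
  have hdvd : n ∣ k := ⟨n, hk'⟩
  have e : Fin n ≃ H := (Fintype.equivFinOfCardEq hn).symm
  -- the embedding part
  refine ⟨(MonoidHom.inl H (H × Multiplicative (ZMod n) × Multiplicative (ZMod n))).range,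
    ⟨MonoidHom.ofInjective (fun a b hab => by simpa using congrArg Prod.fst hab)⟩, ?_⟩
  -- the labels
  set G := H × H × Multiplicative (ZMod n) × Multiplicative (ZMod n) with hG
  refine ⟨(fun p : Fin k × Fin k =>
      ((e (d1 n hn0 p.2), e (d1 n hn0 p.1),
        Multiplicative.ofAdd (d2 n p.2), Multiplicative.ofAdd (d2 n p.1)) : G)),
    (fun p : Fin k × Fin k =>
      ((e (d1 n hn0 p.1), e (d1 n hn0 p.2),
        Multiplicative.ofAdd (d2 n p.1), Multiplicative.ofAdd (d2 n p.2)) : G)),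
    ?_, ?_, ?_⟩
  · -- ρ bijective
    have hb := pattern_bij (k := k) hn hn0 hk' e 1 1 0 0
    have hfun : (fun p : Fin k × Fin k =>
        ((e (d1 n hn0 p.2), e (d1 n hn0 p.1),
          Multiplicative.ofAdd (d2 n p.2), Multiplicative.ofAdd (d2 n p.1)) : G))
        = (fun p : Fin k × Fin k =>
          ((e (d1 n hn0 p.1) * 1, 1 * e (d1 n hn0 p.2),
            Multiplicative.ofAdd (d2 n p.1 + 0), Multiplicative.ofAdd (0 + d2 n p.2)) : G))
          ∘ (Equiv.prodComm (Fin k) (Fin k)) := by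
      funext p
      simp
    rw [hfun]
    exact hb.comp (Equiv.prodComm (Fin k) (Fin k)).bijective
  · -- γ bijective
    have hb := pattern_bij (k := k) hn hn0 hk' e 1 1 0 0
    have hfun : (fun p : Fin k × Fin k =>
        ((e (d1 n hn0 p.1), e (d1 n hn0 p.2),
          Multiplicative.ofAdd (d2 n p.1), Multiplicative.ofAdd (d2 n p.2)) : G))
        = (fun p : Fin k × Fin k =>
          ((e (d1 n hn0 p.1) * 1, 1 * e (d1 n hn0 p.2),
            Multiplicative.ofAdd (d2 n p.1 + 0), Multiplicative.ofAdd (0 + d2 n p.2)) : G)) := by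
      funext p
      simp
    rw [hfun]
    exact hb
  intro m i
  constructor
  · -- block bijectivity
    have hb := pattern_bij (k := k) hn hn0 hk' e (e (d1 n hn0 i)) (e (d1 n hn0 m))
      (d2 n i) (d2 n m)
    exact hb
  intro j
  have hsum : ∑ t : Fin k, d2 n t = 0 := sum_d2 hn0 hk'
  have hAdd : ∀ (a : Fin k), ∀ t : Fin k, d1 n hn0 (a + (t + (n : Fin k))) = d1 n hn0 (a + t) := by
    intro a t
    rw [← add_assoc]
    exact d1_add_n hn0 hdvd (a + t)
  have hSub : ∀ (a : Fin k), ∀ t : Fin k, d1 n hn0 (a - (t + (n : Fin k))) = d1 n hn0 (a - t) := by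
    intro a t
    rw [sub_add_eq_sub_sub]
    exact d1_sub_n hn0 hdvd (a - t)
  have hsum_add : ∀ a : Fin k, ∑ t : Fin k, d2 n (a + t) = 0 := by
    intro a
    exact (Fintype.sum_equiv (Equiv.addLeft a) (fun t => d2 n (a + t)) (d2 n)
      (fun t => rfl)).trans hsum
  have hsum_sub : ∀ a : Fin k, ∑ t : Fin k, d2 n (a - t) = 0 := by
    intro a
    exact (Fintype.sum_equiv (Equiv.subLeft a) (fun t => d2 n (a - t)) (d2 n)
      (fun t => rfl)).trans hsum
  have hconstsum : ∀ c : ZMod n, ∑ _t : Fin k, c = 0 := sum_const_zmod hk'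
  refine ⟨?_, ?_, ?_, ?_⟩
  · -- row
    exact master hn hn0 hk'
      (fun _ => e (d1 n hn0 j) * e (d1 n hn0 i))
      (fun ℓ => e (d1 n hn0 m) * e (d1 n hn0 ℓ))
      (fun _ => d2 n j + d2 n i)
      (fun ℓ => d2 n m + d2 n ℓ)
      (fun t => rfl)
      (fun t => by simp only [d1_add_n hn0 hdvd])
      (hconstsum _)
      (by rw [Finset.sum_add_distrib, hconstsum, hsum, add_zero])
  · -- column
    exact master hn hn0 hk'
      (fun ℓ => e (d1 n hn0 ℓ) * e (d1 n hn0 i))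
      (fun _ => e (d1 n hn0 m) * e (d1 n hn0 j))
      (fun ℓ => d2 n ℓ + d2 n i)
      (fun _ => d2 n m + d2 n j)
      (fun t => by simp only [d1_add_n hn0 hdvd])
      (fun t => rfl)
      (by rw [Finset.sum_add_distrib, hconstsum, hsum, zero_add])
      (hconstsum _)
  · -- broken diagonal
    exact master hn hn0 hk'
      (fun ℓ => e (d1 n hn0 ℓ) * e (d1 n hn0 i))
      (fun ℓ => e (d1 n hn0 m) * e (d1 n hn0 (j + ℓ)))
      (fun ℓ => d2 n ℓ + d2 n i)
      (fun ℓ => d2 n m + d2 n (j + ℓ))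
      (fun t => by simp only [d1_add_n hn0 hdvd])
      (fun t => by simp only [← add_assoc, d1_add_n hn0 hdvd])
      (by rw [Finset.sum_add_distrib, hconstsum, hsum, zero_add])
      (by rw [Finset.sum_add_distrib, hconstsum, hsum_add, add_zero])
  · -- broken antidiagonal
    exact master hn hn0 hk'
      (fun ℓ => e (d1 n hn0 ℓ) * e (d1 n hn0 i))
      (fun ℓ => e (d1 n hn0 m) * e (d1 n hn0 (j - ℓ)))
      (fun ℓ => d2 n ℓ + d2 n i)
      (fun ℓ => d2 n m + d2 n (j - ℓ))
      (fun t => by simp only [d1_add_n hn0 hdvd])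
      (fun t => by simp only [sub_add_eq_sub_sub, d1_sub_n hn0 hdvd])
      (by rw [Finset.sum_add_distrib, hconstsum, hsum, zero_add])
      (by rw [Finset.sum_add_distrib, hconstsum, hsum_sub, add_zero])
end

section
/- Let E be a group, let a, b ∈ E, and let z ∈ Z(E) satisfy a·b = b·a·z. Then for all integers n, i, m ≥ 0, the ordered product ∏_{ℓ=0}^{n} (b^{ℓ+i}·a^m) equals ( ∏_{ℓ=0}^{n} b^{ℓ+i} ) · (a^m)^{n+1} · ∏_{ℓ=0}^{n} (z^m)^{ℓ(ℓ+i)}. -/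
section Aux

variable {E : Type*} [Group E] (a b z : E)

lemma aux_central (hz : z ∈ Subgroup.center E) (k : ℕ) (g : E) :
    z ^ k * g = g * z ^ k :=
  ((Subgroup.mem_center_iff.mp (Subgroup.pow_mem _ hz k)) g).symm

lemma aux_comm1 (hz : z ∈ Subgroup.center E) (hab : a * b = b * a * z) (k : ℕ) :
    a * b ^ k = b ^ k * a * z ^ k := by
  induction k with
  | zero => simp
  | succ k ih =>
      calc a * b ^ (k + 1) = (a * b ^ k) * b := by rw [pow_succ, mul_assoc]
        _ = b ^ k * a * (z ^ k * b) := by rw [ih]; group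
        _ = b ^ k * (a * b) * z ^ k := by rw [aux_central z hz]; group
        _ = b ^ k * (b * a * z) * z ^ k := by rw [hab]
        _ = b ^ (k + 1) * a * z ^ (k + 1) := by
              have hzz : z * z ^ k = z ^ k * z := ((Commute.refl z).pow_right k).eq
              simp only [pow_succ, mul_assoc, hzz]

lemma aux_comm (hz : z ∈ Subgroup.center E) (hab : a * b = b * a * z) (m k : ℕ) :
    a ^ m * b ^ k = b ^ k * a ^ m * z ^ (m * k) := by
  induction m with
  | zero => simp
  | succ m ih =>
      calc a ^ (m + 1) * b ^ k = a * (a ^ m * b ^ k) := by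
              rw [pow_succ']; group
        _ = (a * b ^ k) * (a ^ m * z ^ (m * k)) := by rw [ih]; group
        _ = b ^ k * a * z ^ k * (a ^ m * z ^ (m * k)) := by
              rw [aux_comm1 a b z hz hab]
        _ = b ^ k * a ^ (m + 1) * z ^ ((m + 1) * k) := by
              rw [mul_assoc (b ^ k * a), ← mul_assoc (z ^ k), aux_central z hz k (a ^ m)]
              rw [pow_succ', Nat.succ_mul, pow_add]
              simp only [mul_assoc, pow_mul_comm]

lemma aux_main {E : Type*} [Group E] (B c A w Z : E)
    (hw : ∀ g : E, w * g = g * w) (hZ : ∀ g : E, Z * g = g * Z) (k : ℕ)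
    (key : A ^ k * c = c * A ^ k * w) :
    B * A ^ k * Z * (c * A) = B * c * A ^ (k + 1) * (Z * w) := by
  calc B * A ^ k * Z * (c * A) = B * (A ^ k * c) * A * Z := by
        rw [mul_assoc (B * A ^ k), hZ]; simp only [mul_assoc]
    _ = B * (c * A ^ k * w) * A * Z := by rw [key]
    _ = B * c * A ^ (k + 1) * (Z * w) := by
        simp only [mul_assoc]
        rw [hw (A * Z), hZ w]
        simp only [pow_succ, mul_assoc]
        rw [hZ w]

end Aux

/-- Step 6 of the p-groups application: a product formula for
`∏_{ℓ=0}^{n} b ^ (ℓ + i) * a ^ m`. -/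
theorem prod_pow_formula {E : Type*} [Group E] (a b z : E)
    (hz : z ∈ Subgroup.center E) (hab : a * b = b * a * z) (n i m : ℕ) :
    (List.ofFn fun ℓ : Fin (n + 1) => b ^ ((ℓ : ℕ) + i) * a ^ m).prod =
      (List.ofFn fun ℓ : Fin (n + 1) => b ^ ((ℓ : ℕ) + i)).prod * (a ^ m) ^ (n + 1) *
        (List.ofFn fun ℓ : Fin (n + 1) => (z ^ m) ^ ((ℓ : ℕ) * ((ℓ : ℕ) + i))).prod := by
  induction n with
  | zero => simp
  | succ n ih =>
      rw [List.ofFn_succ' (fun ℓ : Fin (n + 1 + 1) => b ^ ((ℓ : ℕ) + i) * a ^ m),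
        List.ofFn_succ' (fun ℓ : Fin (n + 1 + 1) => b ^ ((ℓ : ℕ) + i)),
        List.ofFn_succ' (fun ℓ : Fin (n + 1 + 1) => (z ^ m) ^ ((ℓ : ℕ) * ((ℓ : ℕ) + i)))]
      simp only [List.prod_concat, Fin.coe_castSucc, Fin.val_last]
      rw [ih]
      set B := (List.ofFn fun ℓ : Fin (n + 1) => b ^ ((ℓ : ℕ) + i)).prod
      set Z := (List.ofFn fun ℓ : Fin (n + 1) => (z ^ m) ^ ((ℓ : ℕ) * ((ℓ : ℕ) + i))).prod
      have hZ : ∀ g : E, Z * g = g * Z := by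
        intro g
        have hmem : Z ∈ Subgroup.center E := by
          apply list_prod_mem
          intro x hx
          simp only [Z, List.mem_ofFn] at hx
          obtain ⟨ℓ, rfl⟩ := hx
          exact Subgroup.pow_mem _ (Subgroup.pow_mem _ hz m) _
        exact (Subgroup.mem_center_iff.mp hmem g).symm
      have hw : ∀ g : E, (z ^ m) ^ ((n + 1) * (n + 1 + i)) * g
          = g * (z ^ m) ^ ((n + 1) * (n + 1 + i)) := by
        intro g
        rw [← pow_mul]
        exact aux_central z hz _ g
      have key : (a ^ m) ^ (n + 1) * b ^ (n + 1 + i)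
          = b ^ (n + 1 + i) * (a ^ m) ^ (n + 1) * (z ^ m) ^ ((n + 1) * (n + 1 + i)) := by
        have := aux_comm a b z hz hab (m * (n + 1)) (n + 1 + i)
        rw [pow_mul, mul_assoc m, pow_mul] at this
        exact this
      exact aux_main B (b ^ (n + 1 + i)) (a ^ m) _ Z hw hZ (n + 1) key
end

section
/- Let p be an odd prime and E a group. Suppose a, b ∈ E and z ∈ Z(E) satisfy a·b = b·a·z, z has order p, b^p = 1, and either a^p = 1 or a^p = z. Then for all integers i, j ≥ 0, the ordered double product ∏_{k=0}^{p−1} ( ∏_{ℓ=0}^{p−1} (b^ℓ·a^k)·(b^i·a^j) ) equals 1, where the inner product is taken in increasing order of ℓ and the outer product in increasing order of k. -/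
/-- Step 7 of the p-groups application: the double product
`∏_{k=0}^{p-1} ∏_{ℓ=0}^{p-1} (b ^ ℓ * a ^ k) * (b ^ i * a ^ j)` is trivial. -/
theorem double_product_pgroup {E : Type*} [Group E] (p : ℕ) (hp : p.Prime)
    (hodd : Odd p) (a b z : E) (hz : z ∈ Subgroup.center E)
    (hab : a * b = b * a * z) (hzord : orderOf z = p) (hb : b ^ p = 1)
    (ha : a ^ p = 1 ∨ a ^ p = z) (i j : ℕ) :
    (List.ofFn fun k : Fin p =>
      (List.ofFn fun ℓ : Fin p =>
        (b ^ (ℓ : ℕ) * a ^ (k : ℕ)) * (b ^ i * a ^ j)).prod).prod = 1 := by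
  have hzc : ∀ x : E, Commute z x := fun x => ((Subgroup.mem_center_iff.mp hz) x).symm
  have hzpow : ∀ (r : ℕ) (x : E), z ^ r * x = x * z ^ r := fun r x => ((hzc x).pow_left r).eq
  have hz3 : ∀ (r : ℕ) (x y : E), z ^ r * (x * y) = x * (z ^ r * y) := by
    intro r x y; rw [← mul_assoc, hzpow, mul_assoc]
  have hswap1 : ∀ m : ℕ, a * b ^ m = b ^ m * a * z ^ m := by
    intro m
    induction m with
    | zero => simp
    | succ m ih =>
      calc a * b ^ (m+1) = (a * b ^ m) * b := by rw [pow_succ, mul_assoc]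
        _ = b ^ m * a * z ^ m * b := by rw [ih]
        _ = b ^ m * a * b * z ^ m := by rw [mul_assoc (b ^ m * a), hzpow, ← mul_assoc]
        _ = b ^ m * (b * a * z) * z ^ m := by rw [mul_assoc (b ^ m) a b, hab]
        _ = b ^ (m+1) * a * z ^ (m+1) := by
            rw [pow_succ b, pow_succ' z]
            simp only [mul_assoc]
  have hswap : ∀ n m : ℕ, a ^ n * b ^ m = b ^ m * a ^ n * z ^ (n * m) := by
    intro n m
    induction n with
    | zero => simp
    | succ n ih =>
      calc a ^ (n+1) * b ^ m = a ^ n * (a * b ^ m) := by rw [pow_succ, mul_assoc]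
        _ = a ^ n * (b ^ m * a * z ^ m) := by rw [hswap1]
        _ = (a ^ n * b ^ m) * a * z ^ m := by simp only [mul_assoc]
        _ = b ^ m * a ^ n * z ^ (n * m) * a * z ^ m := by rw [ih]
        _ = b ^ m * a ^ n * a * z ^ (n * m) * z ^ m := by
            rw [mul_assoc (b ^ m * a ^ n), hzpow, ← mul_assoc]
        _ = b ^ m * a ^ (n+1) * z ^ ((n+1) * m) := by
            rw [mul_assoc (b ^ m) (a ^ n) a, ← pow_succ, mul_assoc, ← pow_add]
            ring_nf
  have hab2 : ∀ (n m : ℕ) (x : E), a ^ n * (b ^ m * x) = b ^ m * (a ^ n * (z ^ (n * m) * x)) := by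
    intro n m x
    rw [← mul_assoc, hswap, mul_assoc, mul_assoc]
  -- normal form multiplication
  have hmul : ∀ m n r m' n' r' : ℕ,
      (b ^ m * a ^ n * z ^ r) * (b ^ m' * a ^ n' * z ^ r')
        = b ^ (m + m') * a ^ (n + n') * z ^ (r + r' + n * m') := by
    intro m n r m' n' r'
    calc (b ^ m * a ^ n * z ^ r) * (b ^ m' * a ^ n' * z ^ r')
        = b ^ m * (a ^ n * (z ^ r * (b ^ m' * (a ^ n' * z ^ r')))) := by
          simp only [mul_assoc]
      _ = b ^ m * (a ^ n * (b ^ m' * (a ^ n' * (z ^ r * z ^ r')))) := by rw [hz3, hz3]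
      _ = b ^ m * (b ^ m' * (a ^ n * (a ^ n' * (z ^ (n * m') * (z ^ r * z ^ r'))))) := by
          rw [hab2, hz3]
      _ = b ^ (m + m') * a ^ (n + n') * z ^ (n * m' + (r + r')) := by
          simp only [pow_add, mul_assoc]
      _ = b ^ (m + m') * a ^ (n + n') * z ^ (r + r' + n * m') := by
          congr 1
          ring
  -- each inner term in normal form
  have hterm : ∀ k ℓ : ℕ, (b ^ ℓ * a ^ k) * (b ^ i * a ^ j)
      = b ^ (ℓ + i) * a ^ (k + j) * z ^ (k * i) := by
    intro k ℓ
    calc (b ^ ℓ * a ^ k) * (b ^ i * a ^ j)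
        = b ^ ℓ * (a ^ k * b ^ i) * a ^ j := by simp only [mul_assoc]
      _ = b ^ ℓ * (b ^ i * a ^ k * z ^ (k * i)) * a ^ j := by rw [hswap]
      _ = b ^ (ℓ + i) * (a ^ k * (z ^ (k * i) * a ^ j)) := by
          simp only [pow_add, mul_assoc]
      _ = b ^ (ℓ + i) * a ^ (k + j) * z ^ (k * i) := by
          rw [hzpow]
          simp only [pow_add, mul_assoc]
  -- closed form for the inner product
  have inner : ∀ k n : ℕ,
      (List.ofFn fun ℓ : Fin n => (b ^ (ℓ : ℕ) * a ^ k) * (b ^ i * a ^ j)).prod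
        = b ^ (∑ ℓ ∈ Finset.range n, (ℓ + i)) * a ^ (n * (k + j))
            * z ^ (n * (k * i) + (k + j) * ∑ ℓ ∈ Finset.range n, ℓ * (ℓ + i)) := by
    intro k n
    induction n with
    | zero => simp
    | succ n ih =>
      rw [List.ofFn_succ', List.concat_eq_append, List.prod_append, List.prod_singleton]
      simp only [Fin.coe_castSucc, Fin.val_last]
      rw [ih, hterm, hmul]
      congr 2
      · rw [Finset.sum_range_succ]
      · ring
      · rw [Finset.sum_range_succ]; ring
  -- notation for the two key sums
  set S1 : ℕ := ∑ ℓ ∈ Finset.range p, ℓ with hS1def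
  set T : ℕ := ∑ ℓ ∈ Finset.range p, ℓ * (ℓ + i) with hTdef
  -- p divides S1 since p is odd
  obtain ⟨t, ht⟩ := hodd
  have hS1 : S1 = p * t := by
    have h1 : S1 * 2 = p * (p - 1) := Finset.sum_range_id_mul_two p
    have h2 : p - 1 = 2 * t := by omega
    rw [h2] at h1
    have h3 : p * (2 * t) = (p * t) * 2 := by ring
    rw [h3] at h1
    exact Nat.eq_of_mul_eq_mul_right (by norm_num) h1
  have hpS1 : p ∣ S1 := ⟨t, hS1⟩
  -- the b-part of each inner product is trivial
  have hbsum : ∑ ℓ ∈ Finset.range p, (ℓ + i) = S1 + p * i := by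
    rw [Finset.sum_add_distrib, Finset.sum_const, Finset.card_range, smul_eq_mul]
  have hbpart : b ^ (∑ ℓ ∈ Finset.range p, (ℓ + i)) = 1 := by
    rw [hbsum, hS1]
    have : p * t + p * i = p * (t + i) := by ring
    rw [this, pow_mul, hb, one_pow]
  -- a ^ p = z ^ ε for some ε ≤ 1
  obtain ⟨ε, hε, hap⟩ : ∃ ε, ε ≤ 1 ∧ a ^ p = z ^ ε := by
    rcases ha with h | h
    · exact ⟨0, by omega, by simpa using h⟩
    · exact ⟨1, by omega, by simpa using h⟩
  -- each inner product is a power of z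
  have hinner : ∀ k : ℕ,
      (List.ofFn fun ℓ : Fin p => (b ^ (ℓ : ℕ) * a ^ k) * (b ^ i * a ^ j)).prod
        = z ^ (ε * (k + j) + (p * (k * i) + (k + j) * T)) := by
    intro k
    rw [inner k p, hbpart, one_mul, ← hTdef]
    rw [pow_mul, hap, ← pow_mul, ← pow_add]
  -- rewrite the outer product
  have hfun : (fun k : Fin p =>
      (List.ofFn fun ℓ : Fin p =>
        (b ^ (ℓ : ℕ) * a ^ (k : ℕ)) * (b ^ i * a ^ j)).prod)
      = fun k : Fin p => z ^ (ε * ((k : ℕ) + j) + (p * ((k : ℕ) * i) + ((k : ℕ) + j) * T)) := by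
    funext k
    exact hinner k
  have hzprod : ∀ (f : ℕ → ℕ) (n : ℕ),
      (List.ofFn fun k : Fin n => z ^ f (k : ℕ)).prod = z ^ (∑ k ∈ Finset.range n, f k) := by
    intro f n
    induction n with
    | zero => simp
    | succ n ih =>
      rw [List.ofFn_succ', List.concat_eq_append, List.prod_append, List.prod_singleton]
      simp only [Fin.coe_castSucc, Fin.val_last]
      rw [ih, ← pow_add, Finset.sum_range_succ]
  rw [hfun, hzprod (fun k => ε * (k + j) + (p * (k * i) + (k + j) * T)) p]
  -- the total exponent is divisible by p
  have hkj : ∑ k ∈ Finset.range p, (k + j) = S1 + p * j := by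
    rw [Finset.sum_add_distrib, Finset.sum_const, Finset.card_range, smul_eq_mul]
  have hsum : ∑ k ∈ Finset.range p, (ε * (k + j) + (p * (k * i) + (k + j) * T))
      = ε * (S1 + p * j) + ((∑ k ∈ Finset.range p, p * (k * i)) + (S1 + p * j) * T) := by
    rw [Finset.sum_add_distrib, Finset.sum_add_distrib, ← Finset.mul_sum, ← Finset.sum_mul, hkj]
  rw [hsum]
  apply orderOf_dvd_iff_pow_eq_one.mp
  rw [hzord]
  refine dvd_add (Dvd.dvd.mul_left ?_ ε) (dvd_add ?_ (Dvd.dvd.mul_right ?_ T))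
  · exact dvd_add hpS1 (Dvd.intro j rfl)
  · exact Finset.dvd_sum fun k _ => Dvd.intro (k * i) rfl
  · exact dvd_add hpS1 (Dvd.intro j rfl)
end
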